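/- Fix $n\in\mathbb{N}$, $\lambda>0$, $d>0$, $\alpha>2$. If $\beta$ has pdf $f_\beta(x) = \frac{2\lambda\pi d^2 x^{2/\alpha}}{\alpha x}e^{-\lambda\pi d^2(x^{2/\alpha}-1)}$ for $x>1$ (and 0 for $x\leq 1$), then $R = \frac{1}{1+n}\log_2(1+(1+n)\beta)$ has pdf $f_R(x) = \ln 4\cdot\frac{2^{(1+n)x}\lambda\pi d^2}{\alpha}\left(\frac{2^{(1+n)x}-1}{1+n}\right)^{2/\alpha - 1} e^{-\lambda\pi d^2\left(\left(\frac{2^{(1+n)x}-1}{1+n}\right)^{2/\alpha}-1\right)}$ for $x > \frac{\log_2(2+n)}{1+n}$. -/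

import Mathlib

open Real MeasureTheory Set Filter

private lemma if_lt_eq_indicator (a : ℝ) (f : ℝ → ℝ) :
    (fun x => if a < x then f x else 0) = (Set.Ioi a).indicator f := by
  funext x; simp [Set.indicator_apply, Set.mem_Ioi]

/-- `X` has probability density function `f` under measure `μ`. -/
def HasPDF' {Ω : Type*} [MeasurableSpace Ω] (μ : Measure Ω) (X : Ω → ℝ) (f : ℝ → ℝ) : Prop :=
  ∀ s : Set ℝ, MeasurableSet s → μ (X ⁻¹' s) = ENNReal.ofReal (∫ x in s, f x)

theorem stmt_16 {Ω : Type*} [MeasurableSpace Ω] (μ : Measure Ω) [IsProbabilityMeasure μ]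
    (n : ℕ) (lam d α : ℝ) (hlam : 0 < lam) (hd : 0 < d) (hα : 2 < α)
    (β : Ω → ℝ)
    (h : HasPDF' μ β
      (fun x => if 1 < x then
          2 * lam * π * d ^ 2 * x ^ (2 / α) / (α * x)
            * Real.exp (-(lam * π * d ^ 2 * (x ^ (2 / α) - 1)))
        else 0)) :
    HasPDF' μ (fun ω => 1 / (1 + (n:ℝ)) * Real.logb 2 (1 + (1 + (n:ℝ)) * β ω))
      (fun x => if Real.logb 2 (2 + (n:ℝ)) / (1 + (n:ℝ)) < x then
          Real.log 4 * ((2:ℝ) ^ ((1 + (n:ℝ)) * x) * lam * π * d ^ 2 / α)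
            * (((2:ℝ) ^ ((1 + (n:ℝ)) * x) - 1) / (1 + (n:ℝ))) ^ (2 / α - 1)
            * Real.exp (-(lam * π * d ^ 2
                * ((((2:ℝ) ^ ((1 + (n:ℝ)) * x) - 1) / (1 + (n:ℝ))) ^ (2 / α) - 1)))
        else 0) := by
  intro s hs
  have hN0 : (0:ℝ) < 1 + (n:ℝ) := by positivity
  set N : ℝ := 1 + (n:ℝ) with hNdef
  have h2n : (0:ℝ) < 2 + (n:ℝ) := by positivity
  have h2N : (2:ℝ) + (n:ℝ) = 1 + N := by rw [hNdef]; ring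
  set c : ℝ := Real.logb 2 (2 + (n:ℝ)) / N with hc
  have hNc : N * c = Real.logb 2 (2 + (n:ℝ)) := by
    rw [hc]; field_simp
  -- the forward map and inverse map
  set gfun : ℝ → ℝ := fun y => 1 / N * Real.logb 2 (1 + N * y) with hg
  set hfun : ℝ → ℝ := fun x => ((2:ℝ) ^ (N * x) - 1) / N with hh
  have hpow : ∀ x, c < x → (2 + (n:ℝ)) < (2:ℝ) ^ (N * x) := by
    intro x hx
    have h1 : N * c < N * x := mul_lt_mul_of_pos_left hx hN0
    calc (2 + (n:ℝ)) = (2:ℝ) ^ (N * c) := by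
          rw [hNc, Real.rpow_logb two_pos (by norm_num) h2n]
      _ < (2:ℝ) ^ (N * x) := (Real.rpow_lt_rpow_left_iff one_lt_two).mpr h1
  have hfun_gt : ∀ x, c < x → 1 < hfun x := by
    intro x hx
    rw [hh]
    rw [lt_div_iff₀ hN0, one_mul]
    have := hpow x hx
    linarith [h2N]
  have hgh : ∀ x, gfun (hfun x) = x := by
    intro x
    rw [hg, hh]
    simp only
    have : 1 + N * (((2:ℝ) ^ (N * x) - 1) / N) = (2:ℝ) ^ (N * x) := by
      field_simp
      ring
    rw [this, Real.logb_rpow two_pos (by norm_num)]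
    field_simp
  have hhg : ∀ y, (1:ℝ) < y → hfun (gfun y) = y := by
    intro y hy
    rw [hg, hh]
    simp only
    have h1 : (0:ℝ) < 1 + N * y := by nlinarith
    have : N * (1 / N * Real.logb 2 (1 + N * y)) = Real.logb 2 (1 + N * y) := by
      field_simp
    rw [this, Real.rpow_logb two_pos (by norm_num) h1]
    field_simp
    ring
  have hg_gt : ∀ y, (1:ℝ) < y → c < gfun y := by
    intro y hy
    rw [hg, hc]
    simp only
    rw [div_lt_iff₀ hN0]
    have h1 : (2:ℝ) + (n:ℝ) < 1 + N * y := by nlinarith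
    have h2 : Real.logb 2 (2 + (n:ℝ)) < Real.logb 2 (1 + N * y) :=
      Real.logb_lt_logb one_lt_two h2n h1
    calc Real.logb 2 (2 + (n:ℝ)) < Real.logb 2 (1 + N * y) := h2
      _ = 1 / N * Real.logb 2 (1 + N * y) * N := by field_simp
  -- set equality
  have hset : gfun ⁻¹' s ∩ Ioi 1 = hfun '' (s ∩ Ioi c) := by
    ext y
    constructor
    · rintro ⟨hys, hy1⟩
      exact ⟨gfun y, ⟨hys, hg_gt y hy1⟩, hhg y hy1⟩
    · rintro ⟨x, ⟨hxs, hxc⟩, rfl⟩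
      exact ⟨by rw [mem_preimage, hgh x]; exact hxs, hfun_gt x hxc⟩
  -- measurability of gfun
  have hgmeas : Measurable gfun := by
    rw [hg]
    unfold Real.logb
    exact (((Real.measurable_log.comp
      (measurable_const.add (measurable_const.mul measurable_id))).div_const _).const_mul _)
  -- derivative of hfun
  have hderiv : ∀ x : ℝ, HasDerivAt hfun (Real.log 2 * (2:ℝ) ^ (N * x)) x := by
    intro x
    have h1 : HasDerivAt (fun x : ℝ => N * x) N x := by
      simpa using (hasDerivAt_id x).const_mul N
    have h2 : HasDerivAt (fun t : ℝ => (2:ℝ) ^ t) ((2:ℝ) ^ (N * x) * Real.log 2) (N * x) :=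
      (Real.hasStrictDerivAt_const_rpow two_pos (N * x)).hasDerivAt
    have h3 := (h2.comp x h1).sub_const 1 |>.div_const N
    exact h3.congr_deriv (by rw [mul_div_assoc, div_self hN0.ne', mul_one, mul_comm])
  -- injectivity
  have hinj : InjOn hfun (s ∩ Ioi c) := by
    have : StrictMono hfun := by
      intro a b hab
      rw [hh]
      simp only
      gcongr
      exact (Real.rpow_lt_rpow_left_iff one_lt_two).mpr (by nlinarith)
    exact this.injective.injOn
  have key := h (gfun ⁻¹' s) (hgmeas hs)
  have hpre : (fun ω => 1 / N * Real.logb 2 (1 + N * β ω)) ⁻¹' s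
      = β ⁻¹' (gfun ⁻¹' s) := rfl
  rw [hpre, key]
  congr 1
  rw [if_lt_eq_indicator, if_lt_eq_indicator,
    MeasureTheory.setIntegral_indicator measurableSet_Ioi,
    MeasureTheory.setIntegral_indicator measurableSet_Ioi,
    hset,
    integral_image_eq_integral_abs_deriv_smul (hs.inter measurableSet_Ioi)
      (fun x _ => (hderiv x).hasDerivWithinAt) hinj]
  apply MeasureTheory.setIntegral_congr_fun (hs.inter measurableSet_Ioi)
  rintro x ⟨-, hxc⟩
  have hy1 : 1 < hfun x := hfun_gt x hxc
  have hy0 : (0:ℝ) < hfun x := lt_trans one_pos hy1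
  have hp : (0:ℝ) < (2:ℝ) ^ (N * x) := Real.rpow_pos_of_pos two_pos _
  have hlog2 : (0:ℝ) < Real.log 2 := Real.log_pos one_lt_two
  have hlog4 : Real.log 4 = 2 * Real.log 2 := by
    rw [show (4:ℝ) = 2 ^ (2:ℕ) by norm_num, Real.log_pow]; push_cast; ring
  have hα0 : α ≠ 0 := by positivity
  simp only [smul_eq_mul]
  rw [abs_of_pos (mul_pos hlog2 hp), hlog4]
  have hy' : hfun x = ((2:ℝ) ^ (N * x) - 1) / N := by rw [hh]
  rw [← hy']
  rw [Real.rpow_sub hy0, Real.rpow_one]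
  field_simp
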